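/- Let f(z) = \sum_{k=0}^\infty a_k z^k be analytic on the unit disk with |f(z)| < 1, and let 0 < p < 2. Then for all r with 2^{p/2-1} < r < 1, \sum_{k=0}^\infty |a_k|^p r^k \le (1 - r^{2/(2-p)})^{-(1-p/2)}. -/

import Mathlib

open Finset Complex Filter


lemma expsum (N : ℕ) (m : ℤ) (hm : m ≠ 0) (hm' : m.natAbs < N) :
    ∑ j ∈ Finset.range N, (Complex.exp (2 * Real.pi * Complex.I / N) ^ m) ^ j = 0 := by
  have hN : 0 < N := lt_of_le_of_lt (Nat.zero_le _) hm'
  have hNC : (N : ℂ) ≠ 0 := Nat.cast_ne_zero.2 hN.ne'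
  set ζ : ℂ := Complex.exp (2 * Real.pi * Complex.I / N) ^ m with hζ
  have hζval : ζ = Complex.exp (m * (2 * Real.pi * Complex.I / N)) := by
    rw [Complex.exp_int_mul]
  have hζN : ζ ^ N = 1 := by
    rw [hζval, ← Complex.exp_nat_mul]
    have h2 : (N : ℂ) * ((m : ℂ) * (2 * Real.pi * Complex.I / N)) = m * (2 * Real.pi * Complex.I) := by
      field_simp
    rw [h2, Complex.exp_int_mul_two_pi_mul_I]
  have hζ1 : ζ ≠ 1 := by
    rw [hζval, Ne, Complex.exp_eq_one_iff]
    rintro ⟨t, ht⟩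
    have hπ : (Real.pi : ℂ) ≠ 0 := Complex.ofReal_ne_zero.2 Real.pi_ne_zero
    have hmt : (m : ℂ) = t * N := by
      field_simp at ht
      have hI : (2 : ℂ) * Real.pi * Complex.I ≠ 0 := by
        simp [Real.pi_ne_zero, Complex.I_ne_zero]
      apply mul_right_cancel₀ hI
      linear_combination (2 * (Real.pi : ℂ) * Complex.I) * ht
    have hmt' : m = t * N := by exact_mod_cast hmt
    have ht0 : t ≠ 0 := by rintro rfl; simp at hmt'; exact hm hmt'
    have h1 : 1 ≤ t.natAbs := Int.natAbs_pos.mpr ht0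
    have : N ≤ m.natAbs := by
      rw [hmt', Int.natAbs_mul]
      simp only [Int.natAbs_natCast]
      nlinarith
    omega
  rw [geom_sum_eq hζ1, hζN, sub_self, zero_div]

lemma mean_sq (c : ℕ → ℂ) (N : ℕ) (hN : 0 < N) (ρ : ℝ) :
    ∑ j ∈ Finset.range N,
        ‖∑ k ∈ Finset.range N,
            c k * ((ρ : ℂ) * Complex.exp (2 * Real.pi * Complex.I / N) ^ j) ^ k‖ ^ 2
      = N * ∑ k ∈ Finset.range N, ‖c k‖ ^ 2 * ρ ^ (2 * k) := by
  set ζ : ℂ := Complex.exp (2 * Real.pi * Complex.I / N) with hζdef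
  have hζ0 : ζ ≠ 0 := Complex.exp_ne_zero _
  have hζconj : (starRingEnd ℂ) ζ = ζ⁻¹ := by
    rw [hζdef, ← Complex.exp_conj, ← Complex.exp_neg]
    congr 1
    rw [map_div₀, map_mul, map_mul, Complex.conj_I, Complex.conj_ofReal]
    have : (starRingEnd ℂ) 2 = 2 := map_ofNat _ 2
    rw [this, map_natCast]
    ring
  have hzp : ∀ (m : ℤ) (i : ℕ), (ζ ^ m) ^ i = ζ ^ (m * i) := by
    intro m i
    rw [← zpow_natCast (ζ ^ m) i, ← zpow_mul]
  have hzn : ∀ i : ℕ, ζ ^ i = ζ ^ (i : ℤ) := fun i => (zpow_natCast ζ i).symm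
  set P : ℕ → ℂ := fun j => ∑ k ∈ Finset.range N, c k * ((ρ : ℂ) * ζ ^ j) ^ k with hP
  have key : ∑ j ∈ Finset.range N, P j * (starRingEnd ℂ) (P j)
      = (N : ℂ) * ∑ k ∈ Finset.range N, ((‖c k‖ : ℂ)) ^ 2 * (ρ : ℂ) ^ (2 * k) := by
    have expand : ∀ j ∈ Finset.range N, P j * (starRingEnd ℂ) (P j)
        = ∑ k ∈ Finset.range N, ∑ l ∈ Finset.range N,
            (c k * (starRingEnd ℂ) (c l) * (ρ : ℂ) ^ (k + l)) * (ζ ^ ((k : ℤ) - l)) ^ j := by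
      intro j _
      rw [hP]
      simp only [map_sum, map_mul, map_pow, hζconj, Complex.conj_ofReal]
      rw [Finset.sum_mul_sum]
      refine Finset.sum_congr rfl fun k _ => Finset.sum_congr rfl fun l _ => ?_
      have e1 : (ζ ^ ((k : ℤ) - l)) ^ j = ζ ^ (((k : ℤ) - l) * j) := hzp _ _
      have e2 : (ζ ^ j) ^ k = ζ ^ ((j : ℤ) * k) := by rw [hzn j]; exact hzp _ _
      have e3 : ((ζ⁻¹) ^ j) ^ l = ζ ^ (-(j : ℤ) * l) := by
        rw [inv_pow, hzn j, ← zpow_neg]; exact hzp _ _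
      have e4 : ζ ^ (((k : ℤ) - l) * j) = ζ ^ ((j : ℤ) * k) * ζ ^ (-(j : ℤ) * l) := by
        rw [← zpow_add₀ hζ0]; congr 1; ring
      rw [mul_pow, mul_pow, e1, e4, ← e2, ← e3, pow_add]
      ring
    rw [Finset.sum_congr rfl expand]
    rw [Finset.sum_comm]
    have inner : ∀ k ∈ Finset.range N,
        (∑ j ∈ Finset.range N, ∑ l ∈ Finset.range N,
            (c k * (starRingEnd ℂ) (c l) * (ρ : ℂ) ^ (k + l)) * (ζ ^ ((k : ℤ) - l)) ^ j)
        = (N : ℂ) * (((‖c k‖ : ℂ)) ^ 2 * (ρ : ℂ) ^ (2 * k)) := by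
      intro k hk
      rw [Finset.sum_comm]
      rw [Finset.sum_eq_single k]
      · simp only [sub_self, zpow_zero, one_pow, mul_one]
        rw [Finset.sum_const, Finset.card_range, nsmul_eq_mul]
        have hcc : c k * (starRingEnd ℂ) (c k) = ((‖c k‖ : ℂ)) ^ 2 := by
          rw [Complex.mul_conj, Complex.normSq_eq_norm_sq]
          push_cast
          rfl
        rw [hcc]
        ring
      · intro l hl hlk
        rw [← Finset.mul_sum, hζdef,
          expsum N ((k : ℤ) - l) ?_ ?_, mul_zero]
        · have : (k : ℤ) ≠ l := by exact_mod_cast fun h => hlk (by exact_mod_cast h.symm)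
          exact sub_ne_zero.mpr this
        · have hkN : k < N := Finset.mem_range.mp hk
          have hlN : l < N := Finset.mem_range.mp hl
          omega
      · intro hk'; exact absurd hk hk'
    rw [Finset.sum_congr rfl inner, ← Finset.mul_sum]
  have cast1 : ∀ j, ‖P j‖ ^ 2 = (P j * (starRingEnd ℂ) (P j)).re := by
    intro j
    rw [Complex.mul_conj, Complex.ofReal_re, Complex.normSq_eq_norm_sq]
  calc ∑ j ∈ Finset.range N, ‖P j‖ ^ 2
      = ∑ j ∈ Finset.range N, (P j * (starRingEnd ℂ) (P j)).re :=
        Finset.sum_congr rfl fun j _ => cast1 j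
    _ = (∑ j ∈ Finset.range N, P j * (starRingEnd ℂ) (P j)).re := by rw [Complex.re_sum]
    _ = ((N : ℂ) * ∑ k ∈ Finset.range N, ((‖c k‖ : ℂ)) ^ 2 * (ρ : ℂ) ^ (2 * k)).re := by rw [key]
    _ = N * ∑ k ∈ Finset.range N, ‖c k‖ ^ 2 * ρ ^ (2 * k) := by
        have : ((N : ℂ) * ∑ k ∈ Finset.range N, ((‖c k‖ : ℂ)) ^ 2 * (ρ : ℂ) ^ (2 * k))
            = (((N : ℝ) * ∑ k ∈ Finset.range N, ‖c k‖ ^ 2 * ρ ^ (2 * k) : ℝ) : ℂ) := by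
          push_cast
          rfl
        rw [this, Complex.ofReal_re]

lemma parseval_le (f : ℂ → ℂ) (c : ℕ → ℂ)
    (hf : ∀ z : ℂ, ‖z‖ < 1 → HasSum (fun k : ℕ => c k * z ^ k) (f z))
    (hbd : ∀ z : ℂ, ‖z‖ < 1 → ‖f z‖ < 1)
    (ρ : ℝ) (hρ0 : 0 ≤ ρ) (hρ1 : ρ < 1) (n : ℕ) :
    ∑ k ∈ Finset.range n, ‖c k‖ ^ 2 * ρ ^ (2 * k) ≤ 1 := by
  set ρ' : ℝ := (1 + ρ) / 2 with hρ'def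
  have hρ'1 : ρ' < 1 := by rw [hρ'def]; linarith
  have hρρ' : ρ < ρ' := by rw [hρ'def]; linarith
  have hρ'0 : 0 < ρ' := by rw [hρ'def]; linarith
  -- summability at ρ', coefficient bound
  have hz' : ‖((ρ' : ℂ))‖ < 1 := by
    rw [Complex.norm_real, Real.norm_eq_abs, abs_of_pos hρ'0]; exact hρ'1
  have hsum' : Summable (fun k : ℕ => c k * (ρ' : ℂ) ^ k) := (hf _ hz').summable
  have htend : Tendsto (fun k : ℕ => ‖c k‖ * ρ' ^ k) atTop (nhds 0) := by
    have := hsum'.tendsto_atTop_zero.norm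
    simp only [norm_zero] at this
    convert this using 2 with k
    rw [norm_mul, norm_pow, Complex.norm_real, Real.norm_eq_abs, abs_of_pos hρ'0]
  obtain ⟨C, hC⟩ : ∃ C : ℝ, ∀ k, ‖c k‖ * ρ' ^ k ≤ C := by
    obtain ⟨C, hC⟩ := htend.bddAbove_range
    exact ⟨C, fun k => hC (Set.mem_range_self k)⟩
  have hC0 : 0 ≤ C := le_trans (by positivity) (hC 0)
  set σ : ℝ := ρ / ρ' with hσdef
  have hσ0 : 0 ≤ σ := div_nonneg hρ0 hρ'0.le
  have hσ1 : σ < 1 := (div_lt_one hρ'0).2 hρρ'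
  have hcoef : ∀ k, ‖c k‖ * ρ ^ k ≤ C * σ ^ k := by
    intro k
    have h1 : ρ ^ k = ρ' ^ k * σ ^ k := by
      rw [hσdef, ← mul_pow, mul_comm ρ', div_mul_cancel₀ _ hρ'0.ne']
    have h2 : ‖c k‖ * ρ ^ k = (‖c k‖ * ρ' ^ k) * σ ^ k := by rw [h1]; ring
    rw [h2]
    exact mul_le_mul_of_nonneg_right (hC k) (by positivity)
  set δ : ℕ → ℝ := fun N => C * σ ^ N / (1 - σ) with hδdef
  have hδ0 : ∀ N, 0 ≤ δ N := fun N => by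
    apply div_nonneg (by positivity); linarith
  -- tail bound
  have htail : ∀ z : ℂ, ‖z‖ = ρ → ∀ N : ℕ,
      ‖f z - ∑ k ∈ Finset.range N, c k * z ^ k‖ ≤ δ N := by
    intro z hz N
    have hz1 : ‖z‖ < 1 := by rw [hz]; exact hρ1
    have hsz : Summable (fun k : ℕ => c k * z ^ k) := (hf z hz1).summable
    have h2 := Summable.sum_add_tsum_nat_add N hsz
    rw [(hf z hz1).tsum_eq] at h2
    have heq : f z - ∑ k ∈ Finset.range N, c k * z ^ k
        = ∑' k : ℕ, c (k + N) * z ^ (k + N) := (eq_sub_of_add_eq' h2).symm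
    rw [heq]
    have hmaj : ∀ k : ℕ, ‖c (k + N) * z ^ (k + N)‖ ≤ C * σ ^ N * σ ^ k := by
      intro k
      rw [norm_mul, norm_pow, hz]
      calc ‖c (k + N)‖ * ρ ^ (k + N) ≤ C * σ ^ (k + N) := hcoef _
        _ = C * σ ^ N * σ ^ k := by rw [pow_add]; ring
    have hmsum : Summable (fun k : ℕ => C * σ ^ N * σ ^ k) :=
      (summable_geometric_of_lt_one hσ0 hσ1).mul_left _
    calc ‖∑' k : ℕ, c (k + N) * z ^ (k + N)‖
        ≤ ∑' k : ℕ, ‖c (k + N) * z ^ (k + N)‖ := norm_tsum_le_tsum_norm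
          (Summable.of_nonneg_of_le (fun k => norm_nonneg _) hmaj hmsum)
      _ ≤ ∑' k : ℕ, C * σ ^ N * σ ^ k := Summable.tsum_le_tsum hmaj
          (Summable.of_nonneg_of_le (fun k => norm_nonneg _) hmaj hmsum) hmsum
      _ = C * σ ^ N * (1 - σ)⁻¹ := by
          rw [tsum_mul_left, tsum_geometric_of_lt_one hσ0 hσ1]
      _ = δ N := by rw [hδdef]; ring
  -- main bound for N ≥ max n 1
  have hmain : ∀ N : ℕ, n ≤ N → 1 ≤ N →
      ∑ k ∈ Finset.range n, ‖c k‖ ^ 2 * ρ ^ (2 * k) ≤ (1 + δ N) ^ 2 := by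
    intro N hnN h1N
    have hNpos : 0 < N := h1N
    have step1 : ∑ k ∈ Finset.range n, ‖c k‖ ^ 2 * ρ ^ (2 * k)
        ≤ ∑ k ∈ Finset.range N, ‖c k‖ ^ 2 * ρ ^ (2 * k) :=
      Finset.sum_le_sum_of_subset_of_nonneg (Finset.range_subset_range.2 hnN)
        (fun k _ _ => by positivity)
    refine le_trans step1 ?_
    have hptle : ∀ j ∈ Finset.range N,
        ‖∑ k ∈ Finset.range N,
            c k * ((ρ : ℂ) * Complex.exp (2 * Real.pi * Complex.I / N) ^ j) ^ k‖ ^ 2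
          ≤ (1 + δ N) ^ 2 := by
      intro j _
      set z : ℂ := (ρ : ℂ) * Complex.exp (2 * Real.pi * Complex.I / N) ^ j with hzdef
      have hznorm : ‖z‖ = ρ := by
        rw [hzdef, norm_mul, norm_pow]
        have : (2 * (Real.pi : ℂ) * Complex.I / N) = ((2 * Real.pi / N : ℝ) : ℂ) * Complex.I := by
          push_cast; ring
        rw [this, Complex.norm_exp_ofReal_mul_I, one_pow, mul_one,
          Complex.norm_real, Real.norm_eq_abs]
        exact _root_.abs_of_nonneg hρ0
      have hz1 : ‖z‖ < 1 := by rw [hznorm]; exact hρ1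
      have hP : ‖∑ k ∈ Finset.range N, c k * z ^ k‖ ≤ 1 + δ N := by
        calc ‖∑ k ∈ Finset.range N, c k * z ^ k‖
            = ‖f z - (f z - ∑ k ∈ Finset.range N, c k * z ^ k)‖ := by
              rw [sub_sub_cancel]
          _ ≤ ‖f z‖ + ‖f z - ∑ k ∈ Finset.range N, c k * z ^ k‖ := norm_sub_le _ _
          _ ≤ 1 + δ N := add_le_add (hbd z hz1).le (htail z hznorm N)
      have h0 : (0:ℝ) ≤ 1 + δ N := by linarith [hδ0 N]
      exact pow_le_pow_left₀ (norm_nonneg _) hP 2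
    have := Finset.sum_le_sum hptle
    rw [mean_sq c N hNpos ρ, Finset.sum_const, Finset.card_range, nsmul_eq_mul] at this
    have hNR : (0:ℝ) < N := by exact_mod_cast hNpos
    exact le_of_mul_le_mul_left this hNR
  -- take N → ∞
  have hδtend : Tendsto δ atTop (nhds 0) := by
    rw [hδdef]
    have : Tendsto (fun N : ℕ => σ ^ N) atTop (nhds 0) :=
      tendsto_pow_atTop_nhds_zero_of_lt_one hσ0 hσ1
    have h2 := (this.const_mul C).div_const (1 - σ)
    simpa using h2
  have hlim : Tendsto (fun N => (1 + δ N) ^ 2) atTop (nhds 1) := by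
    have h1 : Tendsto (fun N => 1 + δ N) atTop (nhds (1 + 0)) :=
      (tendsto_const_nhds : Tendsto (fun _ : ℕ => (1:ℝ)) atTop (nhds 1)).add hδtend
    rw [add_zero] at h1
    have h2 := h1.pow 2
    simpa using h2
  refine ge_of_tendsto hlim ?_
  filter_upwards [eventually_ge_atTop n, eventually_ge_atTop 1] with N h1 h2
  exact hmain N h1 h2

/-- Theorem 1, second part: for `f ∈ 𝓑`, `0 < p < 2` and `2^(p/2-1) < r < 1`,
`∑ |a_k|^p r^k ≤ (1 - r^(2/(2-p)))^(-(1-p/2))`. -/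
theorem stmt_5 (f : ℂ → ℂ) (c : ℕ → ℂ) (p r : ℝ)
    (hf : ∀ z : ℂ, ‖z‖ < 1 → HasSum (fun k : ℕ => c k * z ^ k) (f z))
    (hbd : ∀ z : ℂ, ‖z‖ < 1 → ‖f z‖ < 1)
    (hp0 : 0 < p) (hp2 : p < 2)
    (hr : (2 : ℝ) ^ (p / 2 - 1) < r) (hr1 : r < 1) :
    ∑' k : ℕ, ‖c k‖ ^ p * r ^ k ≤
      (1 - r ^ (2 / (2 - p))) ^ (-(1 - p / 2)) := by
  have hr0 : (0 : ℝ) < r := lt_trans (Real.rpow_pos_of_pos two_pos _) hr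
  have h2p : (0 : ℝ) < 2 - p := by linarith
  have hrp : (0 : ℝ) < r ^ (1 / p) := Real.rpow_pos_of_pos hr0 _
  have hrp1 : r ^ (1 / p) < 1 := Real.rpow_lt_one hr0.le hr1 (by positivity)
  have hrr : (r ^ (1 / p)) ^ p = r := by
    rw [← Real.rpow_mul hr0.le, one_div, inv_mul_cancel₀ hp0.ne', Real.rpow_one]
  -- conjugate exponents
  have hpq : Real.HolderConjugate (2 / p) (2 / (2 - p)) := by
    refine ⟨?_, by positivity, by positivity⟩
    rw [inv_div, inv_div, inv_one]; ring
  -- coefficient bound at a fixed radius ρ₀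
  set ρ₀ : ℝ := (r ^ (1 / p) + 1) / 2 with hρ₀def
  have hρ₀a : r ^ (1 / p) < ρ₀ := by rw [hρ₀def]; linarith
  have hρ₀1 : ρ₀ < 1 := by rw [hρ₀def]; linarith
  have hρ₀0 : 0 < ρ₀ := lt_trans hrp hρ₀a
  have hz₀ : ‖((ρ₀ : ℂ))‖ < 1 := by
    rw [Complex.norm_real, Real.norm_eq_abs, abs_of_pos hρ₀0]; exact hρ₀1
  obtain ⟨C, hC0, hC⟩ : ∃ C : ℝ, 0 ≤ C ∧ ∀ k, ‖c k‖ * ρ₀ ^ k ≤ C := by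
    have hsum' : Summable (fun k : ℕ => c k * (ρ₀ : ℂ) ^ k) := (hf _ hz₀).summable
    have htend : Tendsto (fun k : ℕ => ‖c k‖ * ρ₀ ^ k) atTop (nhds 0) := by
      have := hsum'.tendsto_atTop_zero.norm
      simp only [norm_zero] at this
      convert this using 2 with k
      rw [norm_mul, norm_pow, Complex.norm_real, Real.norm_eq_abs, abs_of_pos hρ₀0]
    obtain ⟨C, hC⟩ := htend.bddAbove_range
    refine ⟨C, le_trans (by positivity) (hC (Set.mem_range_self 0)), fun k => hC (Set.mem_range_self k)⟩
  -- summability of the main series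
  have hsummable : Summable (fun k : ℕ => ‖c k‖ ^ p * r ^ k) := by
    have hs0 : r / ρ₀ ^ p < 1 := by
      rw [div_lt_one (Real.rpow_pos_of_pos hρ₀0 p)]
      calc r = (r ^ (1 / p)) ^ p := hrr.symm
        _ < ρ₀ ^ p := Real.rpow_lt_rpow hrp.le hρ₀a hp0
    have hs0' : 0 ≤ r / ρ₀ ^ p := by positivity
    apply Summable.of_nonneg_of_le (fun k => by positivity)
      (fun k => ?_) ((summable_geometric_of_lt_one hs0' hs0).mul_left (C ^ p))
    have h1 : ‖c k‖ ≤ C / ρ₀ ^ k := by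
      rw [le_div_iff₀ (by positivity)]; exact hC k
    calc ‖c k‖ ^ p * r ^ k ≤ (C / ρ₀ ^ k) ^ p * r ^ k := by
          apply mul_le_mul_of_nonneg_right _ (by positivity)
          exact Real.rpow_le_rpow (norm_nonneg _) h1 hp0.le
      _ = C ^ p * (r / ρ₀ ^ p) ^ k := by
          have e1 : ((ρ₀ : ℝ) ^ k) ^ p = (ρ₀ ^ p) ^ k := by
            rw [← Real.rpow_natCast ρ₀ k, ← Real.rpow_mul hρ₀0.le, mul_comm,
              Real.rpow_mul hρ₀0.le, Real.rpow_natCast]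
          rw [Real.div_rpow hC0 (by positivity), e1, div_pow]
          ring
  apply Summable.tsum_le_of_sum_range_le hsummable
  intro n
  -- limit along ρ → 1⁻
  have hval : 0 < 1 - r ^ (2 / (2 - p)) := by
    have : r ^ (2 / (2 - p)) < 1 := Real.rpow_lt_one hr0.le hr1 (by positivity)
    linarith
  have hT : Tendsto (fun ρ : ℝ => (1 - (r / ρ ^ p) ^ (2 / (2 - p))) ^ (-(1 - p / 2)))
      (nhdsWithin 1 (Set.Iio 1)) (nhds ((1 - r ^ (2 / (2 - p))) ^ (-(1 - p / 2)))) := by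
    have h1 : ContinuousAt (fun ρ : ℝ => ρ ^ p) 1 :=
      Real.continuousAt_rpow_const 1 p (Or.inl one_ne_zero)
    have h2 : ContinuousAt (fun ρ : ℝ => r / ρ ^ p) 1 := by
      apply ContinuousAt.div continuousAt_const h1
      simp [Real.one_rpow]
    have h3 : ContinuousAt (fun ρ : ℝ => (r / ρ ^ p) ^ (2 / (2 - p))) 1 := by
      apply h2.rpow_const
      left
      simp only [Real.one_rpow, div_one]
      exact hr0.ne'
    have h4 : ContinuousAt
        (fun ρ : ℝ => (1 - (r / ρ ^ p) ^ (2 / (2 - p))) ^ (-(1 - p / 2))) 1 := by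
      apply ContinuousAt.rpow_const (continuousAt_const.sub h3)
      left
      simpa [Real.one_rpow] using hval.ne'
    have h5 : Tendsto (fun ρ : ℝ => (1 - (r / ρ ^ p) ^ (2 / (2 - p))) ^ (-(1 - p / 2)))
        (nhdsWithin 1 (Set.Iio 1)) (nhds ((1 - (r / 1 ^ p) ^ (2 / (2 - p))) ^ (-(1 - p / 2)))) :=
      h4.tendsto.mono_left nhdsWithin_le_nhds
    simpa [Real.one_rpow] using h5
  refine ge_of_tendsto hT ?_
  filter_upwards [Ioo_mem_nhdsLT_of_mem (Set.mem_Ioc.2 ⟨hrp1, le_refl 1⟩)] with ρ hρ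
  obtain ⟨hρa, hρ1⟩ := hρ
  have hρ0 : 0 < ρ := lt_trans hrp hρa
  have hρp0 : 0 < ρ ^ p := Real.rpow_pos_of_pos hρ0 p
  have hrρ : r < ρ ^ p := by
    calc r = (r ^ (1 / p)) ^ p := hrr.symm
      _ < ρ ^ p := Real.rpow_lt_rpow hrp.le hρa hp0
  set s : ℝ := r / ρ ^ p with hsdef
  have hs0 : 0 < s := by rw [hsdef]; positivity
  have hs1 : s < 1 := (div_lt_one hρp0).2 hrρ
  set t : ℝ := s ^ (2 / (2 - p)) with htdef
  have ht0 : 0 < t := Real.rpow_pos_of_pos hs0 _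
  have ht1 : t < 1 := Real.rpow_lt_one hs0.le hs1 (by positivity)
  -- Hölder
  set F : ℕ → ℝ := fun k => (‖c k‖ * ρ ^ k) ^ p with hFdef
  set G : ℕ → ℝ := fun k => s ^ k with hGdef
  have hFG : ∀ k, F k * G k = ‖c k‖ ^ p * r ^ k := by
    intro k
    rw [hFdef, hGdef]
    simp only
    rw [Real.mul_rpow (norm_nonneg _) (by positivity)]
    have e1 : ((ρ : ℝ) ^ k) ^ p = (ρ ^ p) ^ k := by
      rw [← Real.rpow_natCast ρ k, ← Real.rpow_mul hρ0.le, mul_comm,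
        Real.rpow_mul hρ0.le, Real.rpow_natCast]
    rw [e1, hsdef, div_pow]
    field_simp
  have hF2 : ∀ k, |F k| ^ (2 / p) = ‖c k‖ ^ 2 * ρ ^ (2 * k) := by
    intro k
    rw [hFdef]
    simp only
    have hx0 : (0:ℝ) ≤ ‖c k‖ * ρ ^ k := by positivity
    rw [_root_.abs_of_nonneg (Real.rpow_nonneg hx0 _), ← Real.rpow_mul hx0]
    have e2 : p * (2 / p) = 2 := by field_simp
    rw [e2, show ((2:ℝ)) = ((2:ℕ):ℝ) by norm_num, Real.rpow_natCast, mul_pow,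
      ← pow_mul, mul_comm k 2]
  have hG2 : ∀ k, |G k| ^ (2 / (2 - p)) = t ^ k := by
    intro k
    rw [hGdef, htdef]
    simp only
    rw [_root_.abs_of_nonneg (pow_nonneg hs0.le k), ← Real.rpow_natCast s k,
      ← Real.rpow_mul hs0.le, mul_comm, Real.rpow_mul hs0.le, Real.rpow_natCast]
  have hsum1 : (0:ℝ) ≤ ∑ k ∈ Finset.range n, ‖c k‖ ^ 2 * ρ ^ (2 * k) :=
    Finset.sum_nonneg fun k _ => by positivity
  have hsum2 : (0:ℝ) ≤ ∑ k ∈ Finset.range n, t ^ k :=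
    Finset.sum_nonneg fun k _ => by positivity
  have hgeom : ∑ k ∈ Finset.range n, t ^ k ≤ (1 - t)⁻¹ := by
    calc ∑ k ∈ Finset.range n, t ^ k ≤ ∑' k : ℕ, t ^ k :=
          Summable.sum_le_tsum _ (fun k _ => by positivity)
            (summable_geometric_of_lt_one ht0.le ht1)
      _ = (1 - t)⁻¹ := tsum_geometric_of_lt_one ht0.le ht1
  have h1t : (0:ℝ) < 1 - t := by linarith
  calc ∑ k ∈ Finset.range n, ‖c k‖ ^ p * r ^ k
      = ∑ k ∈ Finset.range n, F k * G k :=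
        (Finset.sum_congr rfl fun k _ => (hFG k).symm)
    _ ≤ (∑ k ∈ Finset.range n, |F k| ^ (2 / p)) ^ (1 / (2 / p)) *
          (∑ k ∈ Finset.range n, |G k| ^ (2 / (2 - p))) ^ (1 / (2 / (2 - p))) :=
        Real.inner_le_Lp_mul_Lq _ F G hpq
    _ = (∑ k ∈ Finset.range n, ‖c k‖ ^ 2 * ρ ^ (2 * k)) ^ (p / 2) *
          (∑ k ∈ Finset.range n, t ^ k) ^ ((2 - p) / 2) := by
        rw [one_div_div, one_div_div]
        congr 1
        · congr 1
          exact Finset.sum_congr rfl fun k _ => hF2 k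
        · congr 1
          exact Finset.sum_congr rfl fun k _ => hG2 k
    _ ≤ 1 ^ (p / 2) * ((1 - t)⁻¹) ^ ((2 - p) / 2) := by
        apply mul_le_mul
        · exact Real.rpow_le_rpow hsum1
            (parseval_le f c hf hbd ρ (le_of_lt hρ0) hρ1 n) (by positivity)
        · exact Real.rpow_le_rpow hsum2 hgeom (by positivity)
        · exact Real.rpow_nonneg hsum2 _
        · exact Real.rpow_nonneg zero_le_one _
    _ = (1 - t) ^ (-(1 - p / 2)) := by
        rw [Real.one_rpow, one_mul, ← Real.rpow_neg_one (1 - t),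
          ← Real.rpow_mul h1t.le]
        congr 1
        ring
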